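/- For every n ≥ 1, as identities of polynomials in t: P_n(t) = ∑_{σ ∈ 𝔖_n} t^{dda(σ)}·(1+t^2)^{va(σ)} with the boundary convention σ_0 = σ_{n+1} = n+1, and also P_n(t) = ∑_{σ ∈ 𝔖_n} t^{dda(σ)}·(1+t^2)^{pk(σ)} with the convention σ_0 = σ_{n+1} = 0; moreover Q_n(t) = ∑_{σ ∈ 𝔖_n} t^{dda(σ)}·(1+t^2)^{va(σ)} with the convention σ_0 = 0, σ_{n+1} = n+1, and R_n(t) = ∑_{σ ∈ 𝔖_{n+1}} t^{dda(σ)}·(1+t^2)^{va(σ)} with the convention σ_0 = σ_{n+2} = 0 (the last two identities also hold for n = 0). -/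

import Mathlib

open Polynomial

/-- The derivative polynomials `P_n`: `P_0 = t`, `P_{n+1} = (1+t²)·P_n'`. -/
noncomputable def polyP : ℕ → Polynomial ℝ
  | 0 => X
  | n + 1 => (1 + X ^ 2) * derivative (polyP n)

/-- The derivative polynomials `Q_n^{(a)}`:
`Q_0^{(a)} = 1`, `Q_{n+1}^{(a)} = (1+t²)·(Q_n^{(a)})' + a·t·Q_n^{(a)}`;
`Q_n = Q_n^{(1)}` and `R_n = Q_n^{(2)}`. -/
noncomputable def polyQ (a : ℝ) : ℕ → Polynomial ℝ
  | 0 => 1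
  | n + 1 => (1 + X ^ 2) * derivative (polyQ a n) + C a * X * polyQ a n

/-- The sequence `σ₀, σ₁, …, σₙ, σ_{n+1}` of values of a permutation `σ` of `{1,…,n}`
(realized as a permutation of `Fin n`, with `σᵢ = σ(i-1)+1` for `1 ≤ i ≤ n`), with
prescribed boundary values `σ₀ = b0` and `σ_{n+1} = bend`. -/
def extSeq (n : ℕ) (σ : Equiv.Perm (Fin n)) (b0 bend : ℕ) (i : ℕ) : ℕ :=
  if h : 1 ≤ i ∧ i ≤ n then (σ ⟨i - 1, by omega⟩ : Fin n).val + 1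
  else if i = 0 then b0 else bend

/-- The number of valleys of `σ`: indices `1 ≤ i ≤ n` with `σ_{i-1} > σᵢ < σ_{i+1}`. -/
def va (n : ℕ) (σ : Equiv.Perm (Fin n)) (b0 bend : ℕ) : ℕ :=
  ((Finset.Icc 1 n).filter fun i =>
    extSeq n σ b0 bend i < extSeq n σ b0 bend (i - 1) ∧
    extSeq n σ b0 bend i < extSeq n σ b0 bend (i + 1)).card

/-- The number of peaks of `σ`: indices `1 ≤ i ≤ n` with `σ_{i-1} < σᵢ > σ_{i+1}`. -/
def pk (n : ℕ) (σ : Equiv.Perm (Fin n)) (b0 bend : ℕ) : ℕ :=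
  ((Finset.Icc 1 n).filter fun i =>
    extSeq n σ b0 bend (i - 1) < extSeq n σ b0 bend i ∧
    extSeq n σ b0 bend (i + 1) < extSeq n σ b0 bend i).card

/-- The number of double descents plus double ascents of `σ`: indices `1 ≤ i ≤ n` with
`σ_{i-1} > σᵢ > σ_{i+1}` or `σ_{i-1} < σᵢ < σ_{i+1}`. -/
def dda (n : ℕ) (σ : Equiv.Perm (Fin n)) (b0 bend : ℕ) : ℕ :=
  ((Finset.Icc 1 n).filter fun i =>
    (extSeq n σ b0 bend (i + 1) < extSeq n σ b0 bend i ∧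
      extSeq n σ b0 bend i < extSeq n σ b0 bend (i - 1)) ∨
    (extSeq n σ b0 bend (i - 1) < extSeq n σ b0 bend i ∧
      extSeq n σ b0 bend i < extSeq n σ b0 bend (i + 1))).card


open Finset

/-- insertion of a new maximum at slot `k` on the level of up-down (Boolean) words. -/
def insF (m k : ℕ) (u : ℕ → Bool) (j : ℕ) : Bool :=
  if j < k then u j else if j = k then true
  else if j = k + 1 ∧ k < m then false else u (j - 1)

def cntDD (u : ℕ → Bool) (m : ℕ) : ℕ :=
  ((Finset.Icc 1 m).filter fun i => u (i - 1) = u i).card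
def cntV (u : ℕ → Bool) (m : ℕ) : ℕ :=
  ((Finset.Icc 1 m).filter fun i => u (i - 1) = false ∧ u i = true).card
def cntP (u : ℕ → Bool) (m : ℕ) : ℕ :=
  ((Finset.Icc 1 m).filter fun i => u (i - 1) = true ∧ u i = false).card

lemma filter_Icc_succ (p : ℕ → Prop) [DecidablePred p] (m : ℕ) :
    ((Finset.Icc 1 (m + 1)).filter p).card
      = ((Finset.Icc 1 m).filter p).card + (if p (m + 1) then 1 else 0) := by
  have h : Finset.Icc 1 (m + 1) = insert (m + 1) (Finset.Icc 1 m) := by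
    ext x; simp [Finset.mem_Icc, Finset.mem_insert]; omega
  rw [h, Finset.filter_insert]
  split_ifs with hp
  · rw [Finset.card_insert_of_notMem (by simp [Finset.mem_filter, Finset.mem_Icc])]
  · simp

lemma tel (u : ℕ → Bool) (m : ℕ) (h0 : u 0 = true) :
    cntDD u m + 2 * cntV u m + 1 = m + (if u m then 1 else 0) := by
  induction m with
  | zero => simp [cntDD, cntV, h0]
  | succ n ih =>
    unfold cntDD cntV at *
    rw [filter_Icc_succ, filter_Icc_succ]
    simp only [Nat.add_sub_cancel]
    cases hb : u n <;> cases hc : u (n + 1) <;> simp [hb, hc] at ih ⊢ <;> omega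

lemma telP (u : ℕ → Bool) (m : ℕ) (h0 : u 0 = true) :
    cntP u m + (if u m then 1 else 0) = cntV u m + 1 := by
  induction m with
  | zero => simp [cntP, cntV, h0]
  | succ n ih =>
    unfold cntP cntV at *
    rw [filter_Icc_succ, filter_Icc_succ]
    simp only [Nat.add_sub_cancel]
    cases hb : u n <;> cases hc : u (n + 1) <;> simp [hb, hc] at ih ⊢ <;> omega

def pairSum (g : Bool → Bool → ℕ) (u : ℕ → Bool) (m : ℕ) : ℕ :=
  ∑ i ∈ Finset.Icc 1 m, g (u (i - 1)) (u i)

lemma pairSum_succ (g u m) : pairSum g u (m + 1) = pairSum g u m + g (u m) (u (m + 1)) := by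
  unfold pairSum
  rw [Finset.sum_Icc_succ_top (by omega)]
  simp

lemma insF_lt (m k : ℕ) (u : ℕ → Bool) (j : ℕ) (h : j < k) : insF m k u j = u j := by
  simp [insF, h]
lemma insF_eq (m k : ℕ) (u : ℕ → Bool) (h : True) : insF m k u k = true := by
  simp [insF]
lemma insF_mid (m k : ℕ) (u : ℕ → Bool) (h : k < m) : insF m k u (k + 1) = false := by
  simp [insF, h]
lemma insF_ge (m k : ℕ) (u : ℕ → Bool) (j : ℕ) (h : k + 2 ≤ j) : insF m k u j = u (j - 1) := by
  have h1 : ¬ j < k := by omega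
  have h2 : ¬ j = k := by omega
  have h3 : ¬ (j = k + 1 ∧ k < m) := by omega
  simp [insF, h1, h2, h3]
lemma insF_top (m : ℕ) (u : ℕ → Bool) : insF m m u (m + 1) = u m := by
  have : ¬ ((m+1 : ℕ) = m + 1 ∧ m < m) := by omega
  simp [insF, this]

lemma insF_stable (m k : ℕ) (u : ℕ → Bool) (h : k < m) : insF (m + 1) k u = insF m k u := by
  funext j
  unfold insF
  split_ifs with h1 h2 h3 h4 h5 <;> first | rfl | omega

lemma splTop (g : Bool → Bool → ℕ) (u : ℕ → Bool) (m : ℕ) :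
    pairSum g (insF m m u) (m + 1) + (if 1 ≤ m then g (u (m - 1)) (u m) else 0)
    = pairSum g u m + (if 1 ≤ m then g (u (m - 1)) true else 0) + g true (u m) := by
  cases m with
  | zero =>
    simp [pairSum, insF_top, insF_eq]
  | succ n =>
    rw [pairSum_succ, pairSum_succ, pairSum_succ]
    have e1 : insF (n+1) (n+1) u (n + 1) = true := insF_eq _ _ _ trivial
    have e2 : insF (n+1) (n+1) u (n + 2) = u (n + 1) := insF_top _ _
    have e3 : insF (n+1) (n+1) u n = u n := insF_lt _ _ _ _ (by omega)
    have e4 : pairSum g (insF (n+1) (n+1) u) n = pairSum g u n := by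
      unfold pairSum
      apply Finset.sum_congr rfl
      intro i hi
      simp only [Finset.mem_Icc] at hi
      rw [insF_lt _ _ _ _ (by omega), insF_lt _ _ _ _ (by omega)]
    rw [e1, e2, e3, e4]
    simp only [Nat.add_sub_cancel, if_pos (by omega : 1 ≤ n + 1)]
    omega

lemma spl (g : Bool → Bool → ℕ) (u : ℕ → Bool) :
    ∀ m k, k ≤ m →
    pairSum g (insF m k u) (m + 1) + (if 1 ≤ k then g (u (k - 1)) (u k) else 0)
      + (if k < m then g (u k) (u (k + 1)) else 0)
    = pairSum g u m + (if 1 ≤ k then g (u (k - 1)) true else 0)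
      + g true (if k < m then false else u m)
      + (if k < m then g false (u (k + 1)) else 0) := by
  intro m
  induction m with
  | zero =>
    intro k hk
    interval_cases k
    have := splTop g u 0
    simpa using this
  | succ n ih =>
    intro k hk
    rcases Nat.lt_or_ge k (n + 1) with hlt | hge
    · -- k ≤ n
      rcases Nat.lt_or_ge k n with hkn | hkn
      · -- k ≤ n - 1 : use stability and ih
        rw [insF_stable _ _ _ (by omega)]
        rw [pairSum_succ g (insF n k u) (n + 1)]
        have e1 : insF n k u (n + 1 + 1) = u (n + 1) := by
          rw [insF_ge _ _ _ _ (by omega)]; norm_num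
        have e1' : insF n k u (n + 1) = u n := by
          rw [insF_ge _ _ _ _ (by omega)]; norm_num
        rw [e1, e1']
        have H := ih k (by omega)
        have Hs : pairSum g u (n + 1) = pairSum g u n + g (u n) (u (n + 1)) :=
          pairSum_succ g u n
        simp only [if_pos (show k < n + 1 by omega), if_pos hkn] at H ⊢
        omega
      · -- k = n
        have hk' : k = n := by omega
        rw [hk']
        clear hk' hk hlt hkn ih
        rw [pairSum_succ g (insF (n+1) n u) (n + 1)]
        have e1 : insF (n+1) n u (n + 1) = false := insF_mid _ _ _ (by omega)
        have e2 : insF (n+1) n u (n + 1 + 1) = u (n + 1) := by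
          rw [insF_ge _ _ _ _ (by omega)]; norm_num
        have e3 : insF (n+1) n u n = true := insF_eq _ _ _ trivial
        have e4 : pairSum g (insF (n+1) n u) n = pairSum g (insF n n u) n := by
          unfold pairSum
          apply Finset.sum_congr rfl
          intro i hi
          simp only [Finset.mem_Icc] at hi
          unfold insF
          split_ifs <;> first | rfl | omega
        rw [pairSum_succ g (insF (n+1) n u) n, e1, e2, e3, e4]
        have T := splTop g u n
        rw [pairSum_succ g (insF n n u) n] at T
        rw [insF_eq _ _ _ trivial, insF_top] at T
        have Hs : pairSum g u (n + 1) = pairSum g u n + g (u n) (u (n + 1)) :=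
          pairSum_succ g u n
        simp only [if_pos (show n < n + 1 by omega)]
        by_cases h1 : 1 ≤ n
        · simp only [if_pos h1] at T ⊢
          omega
        · simp only [if_neg h1] at T ⊢
          omega
    · -- k = n + 1 : splTop
      have hk : k = n + 1 := by omega
      subst hk
      have := splTop g u (n + 1)
      simp only [if_pos (show 1 ≤ n + 1 by omega), if_neg (show ¬ (n+1) < (n+1) by omega)] at this ⊢
      omega

def gd (a b : Bool) : ℕ := if a = b then 1 else 0
def gv (a b : Bool) : ℕ := if a = false ∧ b = true then 1 else 0
def gp (a b : Bool) : ℕ := if a = true ∧ b = false then 1 else 0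

lemma cntDD_eq (u : ℕ → Bool) (m : ℕ) : cntDD u m = pairSum gd u m := by
  rw [cntDD, Finset.card_filter]; rfl
lemma cntV_eq (u : ℕ → Bool) (m : ℕ) : cntV u m = pairSum gv u m := by
  rw [cntV, Finset.card_filter]
  apply Finset.sum_congr rfl
  intro i _
  by_cases h1 : u (i-1) = false ∧ u i = true <;> simp [gv, h1]

def slotA (u : ℕ → Bool) (m k : ℕ) : Prop :=
  (u k = true ∧ k < m ∧ u (k + 1) = true) ∨ (u k = false ∧ 1 ≤ k ∧ u (k - 1) = false)

instance (u m k) : Decidable (slotA u m k) := by unfold slotA; infer_instance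

lemma cnt_ins (u : ℕ → Bool) (m k : ℕ) (hk : k ≤ m) (h0 : u 0 = true) :
    (slotA u m k → cntDD (insF m k u) (m + 1) + 1 = cntDD u m
        ∧ cntV (insF m k u) (m + 1) = cntV u m + 1)
    ∧ (¬ slotA u m k → cntDD (insF m k u) (m + 1) = cntDD u m + 1
        ∧ cntV (insF m k u) (m + 1) = cntV u m) := by
  have hd := spl gd u m k hk
  have hv := spl gv u m k hk
  rw [← cntDD_eq, ← cntDD_eq] at hd
  rw [← cntV_eq, ← cntV_eq] at hv
  rcases Nat.lt_or_ge k m with h2 | h2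
  · by_cases h1 : 1 ≤ k
    · cases hA : u k <;> cases hB : u (k + 1) <;> cases hC : u (k - 1) <;>
        simp [slotA, h1, h2, hA, hB, hC, gd, gv] at hd hv ⊢ <;> omega
    · have hk0 : k = 0 := by omega
      subst hk0
      cases hB : u 1 <;>
        simp [slotA, h2, h0, hB, gd, gv] at hd hv ⊢ <;> omega
  · have hkm : k = m := by omega
    subst hkm
    have h2' : ¬ k < k := by omega
    by_cases h1 : 1 ≤ k
    · cases hA : u k <;> cases hC : u (k - 1) <;>
        simp [slotA, h1, h2', hA, hC, gd, gv] at hd hv ⊢ <;> omega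
    · have hk0 : k = 0 := by omega
      subst hk0
      simp [slotA, h0, gd, gv] at hd hv ⊢
      omega

lemma cardA (u : ℕ → Bool) (m : ℕ) (h0 : u 0 = true) :
    ((Finset.range (m + 1)).filter fun k => slotA u m k).card = cntDD u m := by
  unfold cntDD
  apply Finset.card_nbij' (i := fun k => if u k then k + 1 else k)
    (j := fun i => if u i then i - 1 else i)
  · intro a ha
    simp only [Finset.mem_coe, Finset.mem_filter, Finset.mem_range] at ha
    obtain ⟨ha1, ha2⟩ := ha
    rcases ha2 with ⟨h1, h2, h3⟩ | ⟨h1, h2, h3⟩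
    · simp only [h1, if_true, Finset.mem_coe, Finset.mem_filter, Finset.mem_Icc]
      refine ⟨⟨by omega, by omega⟩, ?_⟩
      simp only [Nat.add_sub_cancel]
      rw [h1, h3]
    · simp only [h1, if_false, Finset.mem_coe, Finset.mem_filter, Finset.mem_Icc, Bool.false_eq_true]
      refine ⟨⟨by omega, by omega⟩, ?_⟩
      exact h3
  · intro i hi
    simp only [Finset.mem_coe, Finset.mem_filter, Finset.mem_Icc] at hi
    obtain ⟨⟨hi1, hi2⟩, hieq⟩ := hi
    by_cases h : u i = true
    · have h1 : u (i - 1) = true := by rw [hieq]; exact h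
      simp only [h, if_true, Finset.mem_coe, Finset.mem_filter, Finset.mem_range]
      exact ⟨by omega, Or.inl ⟨h1, by omega, by rwa [show i - 1 + 1 = i by omega]⟩⟩
    · have hf : u i = false := by simpa using h
      have h3 : u (i - 1) = false := by rw [hieq]; exact hf
      simp only [hf, Bool.false_eq_true, if_false, Finset.mem_coe, Finset.mem_filter, Finset.mem_range]
      exact ⟨by omega, Or.inr ⟨hf, by omega, h3⟩⟩
  · intro a ha
    simp only [Finset.mem_coe, Finset.mem_filter, Finset.mem_range] at ha
    obtain ⟨_, ha2⟩ := ha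
    rcases ha2 with ⟨h1, h2, h3⟩ | ⟨h1, h2, h3⟩
    · simp [h1, h3]
    · simp [h1]
  · intro i hi
    simp only [Finset.mem_coe, Finset.mem_filter, Finset.mem_Icc] at hi
    obtain ⟨⟨hi1, hi2⟩, hieq⟩ := hi
    by_cases h : u i = true
    · have h' : u (i - 1) = true := by rw [hieq]; exact h
      simp [h, h', show i - 1 + 1 = i by omega]
    · have hf : u i = false := by simp at h; exact h
      simp [hf]

lemma crux (u : ℕ → Bool) (m : ℕ) (h0 : u 0 = true) :
    X * ∑ k ∈ Finset.range (m + 1),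
        (X : Polynomial ℝ) ^ cntDD (insF m k u) (m + 1) * (1 + X ^ 2) ^ cntV (insF m k u) (m + 1)
    = cntDD u m • ((X : Polynomial ℝ) ^ cntDD u m * (1 + X ^ 2) ^ (cntV u m + 1))
      + (2 * cntV u m + if u m then 1 else 2) •
          ((X : Polynomial ℝ) ^ (cntDD u m + 2) * (1 + X ^ 2) ^ cntV u m) := by
  rw [Finset.mul_sum]
  rw [Finset.sum_congr rfl (g := fun k => if slotA u m k
      then (X : Polynomial ℝ) ^ cntDD u m * (1 + X ^ 2) ^ (cntV u m + 1)
      else (X : Polynomial ℝ) ^ (cntDD u m + 2) * (1 + X ^ 2) ^ cntV u m) ?_]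
  · rw [Finset.sum_ite, Finset.sum_const, Finset.sum_const, cardA u m h0]
    congr 1
    congr 1
    have hcards := Finset.card_filter_add_card_filter_not
      (s := Finset.range (m + 1)) (p := fun k => slotA u m k)
    rw [cardA u m h0, Finset.card_range] at hcards
    have htel := tel u m h0
    rcases hb : u m <;> simp [hb] at htel ⊢ <;> omega
  · intro k hk
    simp only [Finset.mem_range] at hk
    have hc := cnt_ins u m k (by omega) h0
    show X * ((X : Polynomial ℝ) ^ cntDD (insF m k u) (m + 1) * (1 + X ^ 2) ^ cntV (insF m k u) (m + 1))
      = if slotA u m k then (X : Polynomial ℝ) ^ cntDD u m * (1 + X ^ 2) ^ (cntV u m + 1)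
        else (X : Polynomial ℝ) ^ (cntDD u m + 2) * (1 + X ^ 2) ^ cntV u m
    by_cases hA : slotA u m k
    · obtain ⟨hd, hv⟩ := hc.1 hA
      rw [if_pos hA, ← hd, hv, pow_succ]
      ring
    · obtain ⟨hd, hv⟩ := hc.2 hA
      rw [if_neg hA, hd, hv]
      ring

lemma der (d v : ℕ) :
    X * (1 + X ^ 2) * derivative ((X : Polynomial ℝ) ^ d * (1 + X ^ 2) ^ v)
      = d • ((X : Polynomial ℝ) ^ d * (1 + X ^ 2) ^ (v + 1))
        + (2 * v) • ((X : Polynomial ℝ) ^ (d + 2) * (1 + X ^ 2) ^ v) := by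
  have hder : derivative (1 + X ^ 2 : Polynomial ℝ) = C 2 * X := by
    simp [derivative_X_pow]
    rw [← C_1, ← C_add]; norm_num
  rw [derivative_mul, derivative_X_pow, derivative_pow, hder]
  simp only [nsmul_eq_mul, Nat.cast_mul, Nat.cast_ofNat, ← Polynomial.C_eq_natCast]
  cases d with
  | zero =>
    cases v with
    | zero => simp
    | succ w =>
      simp only [Nat.cast_zero, map_zero, Nat.add_sub_cancel, pow_zero, Nat.cast_succ]
      push_cast
      simp only [map_ofNat]
      ring
  | succ e =>
    cases v with
    | zero =>
      simp only [Nat.cast_zero, map_zero, Nat.add_sub_cancel, pow_zero, Nat.cast_succ]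
      push_cast
      ring
    | succ w =>
      simp only [Nat.add_sub_cancel]
      push_cast
      simp only [map_ofNat]
      ring

lemma xy_ne : (X * (1 + X ^ 2) : Polynomial ℝ) ≠ 0 := by
  intro h
  have h2 : (X * (1 + X ^ 2) : Polynomial ℝ).coeff 1 = 1 := by
    simp [coeff_X_mul, coeff_one, coeff_X_pow]
  rw [h] at h2
  simp at h2

lemma extSeq_zero (n σ b0 bend) : extSeq n σ b0 bend 0 = b0 := by simp [extSeq]

lemma extSeq_top (n σ b0 bend) (i : ℕ) (h : n + 1 ≤ i) : extSeq n σ b0 bend i = bend := by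
  have h1 : ¬ (1 ≤ i ∧ i ≤ n) := by omega
  have h2 : i ≠ 0 := by omega
  simp [extSeq, h1, h2]

lemma extSeq_interior (n : ℕ) (σ : Equiv.Perm (Fin n)) (b0 bend : ℕ) (i : ℕ)
    (h1 : 1 ≤ i) (h2 : i ≤ n) :
    1 ≤ extSeq n σ b0 bend i ∧ extSeq n σ b0 bend i ≤ n := by
  have h : 1 ≤ i ∧ i ≤ n := ⟨h1, h2⟩
  rw [extSeq, dif_pos h]
  have := (σ ⟨i - 1, by omega⟩).isLt
  omega

/-- the up-down word of a permutation with boundary `(0, bend)`. -/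
def upw (n : ℕ) (σ : Equiv.Perm (Fin n)) (bend : ℕ) (j : ℕ) : Bool :=
  decide (extSeq n σ 0 bend j < extSeq n σ 0 bend (j + 1))

lemma extSeq_adj_ne (n : ℕ) (σ : Equiv.Perm (Fin n)) (bend : ℕ)
    (hb : bend = n + 1 ∨ (bend = 0 ∧ 1 ≤ n)) (j : ℕ) (hj : j ≤ n) :
    extSeq n σ 0 bend j ≠ extSeq n σ 0 bend (j + 1) := by
  rcases Nat.eq_zero_or_pos j with rfl | hj1
  · rw [extSeq_zero]
    rcases Nat.eq_zero_or_pos n with rfl | hn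
    · rw [extSeq_top _ _ _ _ 1 (by omega)]
      omega
    · have := extSeq_interior n σ 0 bend (0 + 1) (by omega) (by omega)
      omega
  · rcases Nat.lt_or_ge j n with hjn | hjn
    · -- both interior, injectivity
      have e1 : (1 ≤ j ∧ j ≤ n) := ⟨by omega, by omega⟩
      have e2 : (1 ≤ j + 1 ∧ j + 1 ≤ n) := ⟨by omega, by omega⟩
      rw [extSeq, dif_pos e1, extSeq, dif_pos e2]
      intro hcon
      have : (σ ⟨j - 1, by omega⟩ : Fin n) = σ ⟨j + 1 - 1, by omega⟩ := by
        apply Fin.ext; omega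
      have := σ.injective this
      rw [Fin.mk.injEq] at this
      omega
    · have hjn' : j = n := by omega
      subst hjn'
      rw [extSeq_top _ _ _ _ (j + 1) (by omega)]
      have := extSeq_interior j σ 0 bend j (by omega) (by omega)
      omega

lemma upw_zero (n : ℕ) (σ : Equiv.Perm (Fin n)) (bend : ℕ)
    (hb : bend = n + 1 ∨ (bend = 0 ∧ 1 ≤ n)) : upw n σ bend 0 = true := by
  rw [upw, extSeq_zero, decide_eq_true_eq]
  rcases Nat.eq_zero_or_pos n with rfl | hn
  · rw [extSeq_top _ _ _ _ (0 + 1) (by omega)]; omega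
  · have := extSeq_interior n σ 0 bend (0 + 1) (by omega) (by omega)
    omega

lemma upw_top_Q (n : ℕ) (σ : Equiv.Perm (Fin n)) : upw n σ (n + 1) n = true := by
  rw [upw, extSeq_top _ _ _ _ (n + 1) (by omega), decide_eq_true_eq]
  rcases Nat.eq_zero_or_pos n with rfl | hn
  · rw [extSeq_zero]; omega
  · have := extSeq_interior n σ 0 (n + 1) n (by omega) (by omega)
    omega

lemma upw_top_R (n : ℕ) (σ : Equiv.Perm (Fin n)) (hn : 1 ≤ n) : upw n σ 0 n = false := by
  rw [upw, extSeq_top _ _ _ _ (n + 1) (by omega)]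
  have := extSeq_interior n σ 0 0 n (by omega) (by omega)
  simp only [decide_eq_false_iff_not]
  omega

lemma dda_eq_cnt (n : ℕ) (σ : Equiv.Perm (Fin n)) (bend : ℕ)
    (hb : bend = n + 1 ∨ (bend = 0 ∧ 1 ≤ n)) :
    dda n σ 0 bend = cntDD (upw n σ bend) n := by
  unfold dda cntDD
  congr 1
  apply Finset.filter_congr
  intro i hi
  simp only [Finset.mem_Icc] at hi
  have d1 := extSeq_adj_ne n σ bend hb (i - 1) (by omega)
  have d2 := extSeq_adj_ne n σ bend hb i (by omega)
  rw [show i - 1 + 1 = i by omega] at d1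
  unfold upw
  rw [show i - 1 + 1 = i by omega]
  by_cases h1 : extSeq n σ 0 bend (i - 1) < extSeq n σ 0 bend i <;>
    by_cases h2 : extSeq n σ 0 bend i < extSeq n σ 0 bend (i + 1) <;>
    simp [h1, h2] <;> omega

lemma va_eq_cnt (n : ℕ) (σ : Equiv.Perm (Fin n)) (bend : ℕ)
    (hb : bend = n + 1 ∨ (bend = 0 ∧ 1 ≤ n)) :
    va n σ 0 bend = cntV (upw n σ bend) n := by
  unfold va cntV
  congr 1
  apply Finset.filter_congr
  intro i hi
  simp only [Finset.mem_Icc] at hi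
  have d1 := extSeq_adj_ne n σ bend hb (i - 1) (by omega)
  have d2 := extSeq_adj_ne n σ bend hb i (by omega)
  rw [show i - 1 + 1 = i by omega] at d1
  unfold upw
  rw [show i - 1 + 1 = i by omega]
  by_cases h1 : extSeq n σ 0 bend (i - 1) < extSeq n σ 0 bend i <;>
    by_cases h2 : extSeq n σ 0 bend i < extSeq n σ 0 bend (i + 1) <;>
    simp [h1, h2] <;> omega

lemma pk_eq_cnt (n : ℕ) (σ : Equiv.Perm (Fin n)) (bend : ℕ)
    (hb : bend = n + 1 ∨ (bend = 0 ∧ 1 ≤ n)) :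
    pk n σ 0 bend = cntP (upw n σ bend) n := by
  unfold pk cntP
  congr 1
  apply Finset.filter_congr
  intro i hi
  simp only [Finset.mem_Icc] at hi
  have d1 := extSeq_adj_ne n σ bend hb (i - 1) (by omega)
  have d2 := extSeq_adj_ne n σ bend hb i (by omega)
  rw [show i - 1 + 1 = i by omega] at d1
  unfold upw
  rw [show i - 1 + 1 = i by omega]
  by_cases h1 : extSeq n σ 0 bend (i - 1) < extSeq n σ 0 bend i <;>
    by_cases h2 : extSeq n σ 0 bend i < extSeq n σ 0 bend (i + 1) <;>
    simp [h1, h2] <;> omega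

lemma cntDD_congr (u u' : ℕ → Bool) (m : ℕ) (h : ∀ j ≤ m, u j = u' j) :
    cntDD u m = cntDD u' m := by
  unfold cntDD
  congr 1
  apply Finset.filter_congr
  intro i hi
  simp only [Finset.mem_Icc] at hi
  rw [h (i - 1) (by omega), h i (by omega)]

lemma cntV_congr (u u' : ℕ → Bool) (m : ℕ) (h : ∀ j ≤ m, u j = u' j) :
    cntV u m = cntV u' m := by
  unfold cntV
  congr 1
  apply Finset.filter_congr
  intro i hi
  simp only [Finset.mem_Icc] at hi
  rw [h (i - 1) (by omega), h i (by omega)]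

def insFun (m : ℕ) (σ : Equiv.Perm (Fin m)) (k : Fin (m + 1)) (i : Fin (m + 1)) : Fin (m + 1) :=
  if h : i.val < k.val then (σ ⟨i.val, by have := k.isLt; omega⟩).castSucc
  else if h2 : i.val = k.val then Fin.last m
  else (σ ⟨i.val - 1, by have := i.isLt; omega⟩).castSucc

lemma insFun_inj (m : ℕ) (σ : Equiv.Perm (Fin m)) (k : Fin (m + 1)) :
    Function.Injective (insFun m σ k) := by
  intro a b hab
  unfold insFun at hab
  have hlast : ∀ x : Fin m, x.castSucc ≠ Fin.last m := by
    intro x h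
    have := congrArg Fin.val h
    simp at this
    omega
  split_ifs at hab with h1 h2 h3 h4 h5
  · have := σ.injective (Fin.castSucc_injective m hab)
    rw [Fin.mk.injEq] at this
    exact Fin.ext this
  · exact absurd hab (hlast _)
  · have := σ.injective (Fin.castSucc_injective m hab)
    rw [Fin.mk.injEq] at this
    apply Fin.ext; omega
  · exact absurd hab.symm (hlast _)
  · apply Fin.ext; omega
  · exact absurd hab.symm (hlast _)
  · have := σ.injective (Fin.castSucc_injective m hab)
    rw [Fin.mk.injEq] at this
    apply Fin.ext; omega
  · exact absurd hab (hlast _)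
  · have := σ.injective (Fin.castSucc_injective m hab)
    rw [Fin.mk.injEq] at this
    apply Fin.ext; omega

noncomputable def insertPerm (m : ℕ) (σ : Equiv.Perm (Fin m)) (k : Fin (m + 1)) :
    Equiv.Perm (Fin (m + 1)) :=
  Equiv.ofBijective (insFun m σ k) (Finite.injective_iff_bijective.mp (insFun_inj m σ k))

lemma insertPerm_apply (m σ k i) : insertPerm m σ k i = insFun m σ k i := rfl

lemma insertPerm_bij (m : ℕ) :
    Function.Bijective (fun p : Fin (m + 1) × Equiv.Perm (Fin m) => insertPerm m p.2 p.1) := by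
  rw [Fintype.bijective_iff_injective_and_card]
  constructor
  · rintro ⟨k, σ⟩ ⟨k', σ'⟩ h
    simp only at h
    have hk : k = k' := by
      have h1 : insertPerm m σ k k = Fin.last m := by
        rw [insertPerm_apply]; unfold insFun
        rw [dif_neg (by omega), dif_pos rfl]
      have h2 : insertPerm m σ' k' k' = Fin.last m := by
        rw [insertPerm_apply]; unfold insFun
        rw [dif_neg (by omega), dif_pos rfl]
      rw [h] at h1
      rw [← h2] at h1
      exact (insertPerm m σ' k').injective h1
    subst hk
    have key1 : ∀ (τ : Equiv.Perm (Fin m)) (i : Fin m), i.val < k.val →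
        insertPerm m τ k i.castSucc = (τ i).castSucc := by
      intro τ i hi
      rw [insertPerm_apply]
      unfold insFun
      rw [dif_pos (by simpa using hi)]
      exact congrArg _ (congrArg τ (Fin.ext (by simp)))
    have key2 : ∀ (τ : Equiv.Perm (Fin m)) (i : Fin m), ¬ i.val < k.val →
        insertPerm m τ k i.succ = (τ i).castSucc := by
      intro τ i hi
      rw [insertPerm_apply]
      unfold insFun
      rw [dif_neg (by simp only [Fin.val_succ]; omega),
        dif_neg (by simp only [Fin.val_succ]; omega)]
      exact congrArg _ (congrArg τ (Fin.ext (by simp)))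
    have hσ : σ = σ' := by
      apply Equiv.ext
      intro i
      by_cases hi : i.val < k.val
      · have k1 := key1 σ i hi
        have k2 := key1 σ' i hi
        rw [h] at k1
        rw [k2] at k1
        exact Fin.castSucc_injective m k1.symm
      · have k1 := key2 σ i hi
        have k2 := key2 σ' i hi
        rw [h] at k1
        rw [k2] at k1
        exact Fin.castSucc_injective m k1.symm
    rw [hσ]
  · simp [Fintype.card_perm, Nat.factorial_succ]

lemma sum_insertPerm (m : ℕ) (F : Equiv.Perm (Fin (m + 1)) → Polynomial ℝ) :
    ∑ τ : Equiv.Perm (Fin (m + 1)), F τ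
      = ∑ σ : Equiv.Perm (Fin m), ∑ k : Fin (m + 1), F (insertPerm m σ k) := by
  rw [← Fintype.sum_bijective _ (insertPerm_bij m)
    (fun p => F (insertPerm m p.2 p.1)) F (fun p => rfl)]
  rw [Fintype.sum_prod_type]
  rw [Finset.sum_comm]

lemma ins_pos_lt (m : ℕ) (σ : Equiv.Perm (Fin m)) (k : Fin (m + 1)) (b b' : ℕ) (j : ℕ)
    (hj : j ≤ k.val) :
    extSeq (m + 1) (insertPerm m σ k) 0 b' j = extSeq m σ 0 b j := by
  have hk := k.isLt
  rcases Nat.eq_zero_or_pos j with rfl | hj1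
  · rw [extSeq_zero, extSeq_zero]
  · have e1 : 1 ≤ j ∧ j ≤ m + 1 := ⟨by omega, by omega⟩
    have e2 : 1 ≤ j ∧ j ≤ m := ⟨by omega, by omega⟩
    rw [extSeq, dif_pos e1, extSeq, dif_pos e2]
    rw [insertPerm_apply]
    unfold insFun
    rw [dif_pos (by simp only []; omega)]
    simp only [Fin.coe_castSucc, Nat.add_right_cancel_iff]

lemma ins_pos_mid (m : ℕ) (σ : Equiv.Perm (Fin m)) (k : Fin (m + 1)) (b' : ℕ) :
    extSeq (m + 1) (insertPerm m σ k) 0 b' (k.val + 1) = m + 1 := by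
  have hk := k.isLt
  have e1 : 1 ≤ k.val + 1 ∧ k.val + 1 ≤ m + 1 := ⟨by omega, by omega⟩
  rw [extSeq, dif_pos e1]
  rw [insertPerm_apply]
  unfold insFun
  rw [dif_neg (by simp only []; omega), dif_pos (by simp only []; omega)]
  simp [Fin.last]

lemma ins_pos_gt (m : ℕ) (σ : Equiv.Perm (Fin m)) (k : Fin (m + 1)) (b b' : ℕ) (j : ℕ)
    (hj1 : k.val + 2 ≤ j) (hj2 : j ≤ m + 1) :
    extSeq (m + 1) (insertPerm m σ k) 0 b' j = extSeq m σ 0 b (j - 1) := by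
  have hk := k.isLt
  have e1 : 1 ≤ j ∧ j ≤ m + 1 := ⟨by omega, by omega⟩
  have e2 : 1 ≤ j - 1 ∧ j - 1 ≤ m := ⟨by omega, by omega⟩
  rw [extSeq, dif_pos e1, extSeq, dif_pos e2]
  rw [insertPerm_apply]
  unfold insFun
  rw [dif_neg (by simp only []; omega), dif_neg (by simp only []; omega)]
  simp only [Fin.coe_castSucc, Nat.add_right_cancel_iff]

lemma word_ins (m : ℕ) (σ : Equiv.Perm (Fin m)) (k : Fin (m + 1)) (bend bend' : ℕ)
    (hb : (bend = m + 1 ∧ bend' = m + 2) ∨ (bend = 0 ∧ bend' = 0)) (j : ℕ) (hj : j ≤ m + 1) :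
    upw (m + 1) (insertPerm m σ k) bend' j = insF m k.val (upw m σ bend) j := by
  have hk := k.isLt
  rcases Nat.lt_or_ge j k.val with h1 | h1
  · -- j < k
    rw [insF_lt _ _ _ _ h1]
    unfold upw
    rw [ins_pos_lt m σ k bend bend' j (by omega), ins_pos_lt m σ k bend bend' (j+1) (by omega)]
  · rcases Nat.eq_or_lt_of_le h1 with h2 | h2
    · -- j = k
      subst h2
      rw [insF_eq _ _ _ trivial]
      unfold upw
      rw [ins_pos_lt m σ k bend bend' k.val (le_refl _), ins_pos_mid m σ k bend']
      rcases Nat.eq_zero_or_pos k.val with hk0 | hk0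
      · rw [hk0, extSeq_zero]; simp
      · have := extSeq_interior m σ 0 bend k.val (by omega) (by omega)
        simp only [decide_eq_true_eq]
        omega
    · rcases Nat.eq_or_lt_of_le h2 with h3 | h3
      · -- j = k + 1
        have hjk : j = k.val + 1 := h3.symm
        subst hjk
        rcases Nat.lt_or_ge k.val m with h4 | h4
        · -- k < m
          rw [insF_mid _ _ _ h4]
          unfold upw
          rw [ins_pos_mid m σ k bend',
            ins_pos_gt m σ k bend bend' (k.val + 1 + 1) (by omega) (by omega)]
          have := extSeq_interior m σ 0 bend (k.val + 1 + 1 - 1) (by omega) (by omega)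
          simp only [decide_eq_false_iff_not]
          omega
        · -- k = m
          have hkm : k.val = m := by omega
          rw [hkm, insF_top]
          unfold upw
          have hmid := ins_pos_mid m σ k bend'
          rw [hkm] at hmid
          rw [hmid, extSeq_top (m+1) _ 0 bend' (m + 1 + 1) (by omega),
            extSeq_top m σ 0 bend (m + 1) (by omega)]
          rw [decide_eq_decide]
          rcases Nat.eq_zero_or_pos m with rfl | hm
          · rw [extSeq_zero]; omega
          · have := extSeq_interior m σ 0 bend m (by omega) (by omega)
            omega
      · -- j ≥ k + 2
        rw [insF_ge _ _ _ _ (by omega)]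
        unfold upw
        rcases Nat.lt_or_ge j (m + 1) with h5 | h5
        · rw [ins_pos_gt m σ k bend bend' j (by omega) (by omega),
            ins_pos_gt m σ k bend bend' (j + 1) (by omega) (by omega)]
          rw [show j + 1 - 1 = j - 1 + 1 by omega]
        · -- j = m + 1
          have hjm : j = m + 1 := by omega
          subst hjm
          have hm1 : 1 ≤ m := by omega
          rw [ins_pos_gt m σ k bend bend' (m + 1) (by omega) (by omega)]
          rw [extSeq_top (m+1) _ 0 bend' (m + 1 + 1) (by omega)]
          rw [extSeq_top m σ 0 bend (m + 1 - 1 + 1) (by omega)]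
          rw [decide_eq_decide]
          have := extSeq_interior m σ 0 bend (m + 1 - 1) (by omega) (by omega)
          omega

lemma core (m : ℕ) (bend bend' : ℕ) (aN : ℕ)
    (hb : (bend = m + 1 ∧ bend' = m + 2 ∧ aN = 1) ∨ (bend = 0 ∧ bend' = 0 ∧ 1 ≤ m ∧ aN = 2)) :
    (∑ τ : Equiv.Perm (Fin (m + 1)),
        (X : Polynomial ℝ) ^ dda (m + 1) τ 0 bend' * (1 + X ^ 2) ^ va (m + 1) τ 0 bend')
      = (1 + X ^ 2) * derivative (∑ σ : Equiv.Perm (Fin m),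
            (X : Polynomial ℝ) ^ dda m σ 0 bend * (1 + X ^ 2) ^ va m σ 0 bend)
        + C (aN : ℝ) * X * (∑ σ : Equiv.Perm (Fin m),
            (X : Polynomial ℝ) ^ dda m σ 0 bend * (1 + X ^ 2) ^ va m σ 0 bend) := by
  have hbw : (bend = m + 1 ∧ bend' = m + 2) ∨ (bend = 0 ∧ bend' = 0) := by
    rcases hb with ⟨h1, h2, _⟩ | ⟨h1, h2, _, _⟩
    · exact Or.inl ⟨h1, h2⟩
    · exact Or.inr ⟨h1, h2⟩
  have hbS : bend = m + 1 ∨ (bend = 0 ∧ 1 ≤ m) := by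
    rcases hb with ⟨h1, _, _⟩ | ⟨h1, _, h3, _⟩
    · exact Or.inl h1
    · exact Or.inr ⟨h1, h3⟩
  have hbS' : bend' = (m + 1) + 1 ∨ (bend' = 0 ∧ 1 ≤ m + 1) := by
    rcases hb with ⟨_, h2, _⟩ | ⟨_, h2, _, _⟩
    · exact Or.inl (by omega)
    · exact Or.inr ⟨h2, by omega⟩
  have hA : ∀ σ : Equiv.Perm (Fin m), (if upw m σ bend m then 1 else 2) = aN := by
    intro σ
    rcases hb with ⟨h1, _, h3⟩ | ⟨h1, _, h4, h3⟩
    · subst h1; rw [upw_top_Q]; simp [h3]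
    · subst h1; rw [upw_top_R m σ h4]; simp [h3]
  rw [sum_insertPerm]
  have hstep : ∀ σ : Equiv.Perm (Fin m),
      (∑ k : Fin (m + 1), (X : Polynomial ℝ) ^ dda (m + 1) (insertPerm m σ k) 0 bend'
          * (1 + X ^ 2) ^ va (m + 1) (insertPerm m σ k) 0 bend')
        = ∑ kk ∈ Finset.range (m + 1),
            (X : Polynomial ℝ) ^ cntDD (insF m kk (upw m σ bend)) (m + 1)
              * (1 + X ^ 2) ^ cntV (insF m kk (upw m σ bend)) (m + 1) := by
    intro σ
    rw [← Fin.sum_univ_eq_sum_range (fun kk =>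
      (X : Polynomial ℝ) ^ cntDD (insF m kk (upw m σ bend)) (m + 1)
        * (1 + X ^ 2) ^ cntV (insF m kk (upw m σ bend)) (m + 1)) (m + 1)]
    apply Finset.sum_congr rfl
    intro k _
    rw [dda_eq_cnt (m + 1) _ bend' hbS', va_eq_cnt (m + 1) _ bend' hbS',
      cntDD_congr _ _ (m + 1) (fun j hj => word_ins m σ k bend bend' hbw j hj),
      cntV_congr _ _ (m + 1) (fun j hj => word_ins m σ k bend bend' hbw j hj)]
  have hW : (∑ σ : Equiv.Perm (Fin m),
        (X : Polynomial ℝ) ^ dda m σ 0 bend * (1 + X ^ 2) ^ va m σ 0 bend)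
      = ∑ σ : Equiv.Perm (Fin m),
        (X : Polynomial ℝ) ^ cntDD (upw m σ bend) m * (1 + X ^ 2) ^ cntV (upw m σ bend) m := by
    apply Finset.sum_congr rfl
    intro σ _
    rw [dda_eq_cnt m σ bend hbS, va_eq_cnt m σ bend hbS]
  rw [hW]
  apply mul_left_cancel₀ xy_ne
  have main : ∀ σ ∈ (Finset.univ : Finset (Equiv.Perm (Fin m))),
      (X * (1 + X ^ 2)) * (∑ k : Fin (m + 1),
          (X : Polynomial ℝ) ^ dda (m + 1) (insertPerm m σ k) 0 bend'
            * (1 + X ^ 2) ^ va (m + 1) (insertPerm m σ k) 0 bend')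
        = (X * (1 + X ^ 2)) * ((1 + X ^ 2)
              * derivative ((X : Polynomial ℝ) ^ cntDD (upw m σ bend) m
                  * (1 + X ^ 2) ^ cntV (upw m σ bend) m)
            + C (aN : ℝ) * X * ((X : Polynomial ℝ) ^ cntDD (upw m σ bend) m
                  * (1 + X ^ 2) ^ cntV (upw m σ bend) m)) := by
    intro σ _
    rw [hstep σ]
    have hc := crux (upw m σ bend) m (upw_zero m σ bend hbS)
    rw [hA σ] at hc
    have hd := der (cntDD (upw m σ bend) m) (cntV (upw m σ bend) m)
    rw [mul_comm X (1 + X ^ 2 : Polynomial ℝ), mul_assoc, hc]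
    simp only [nsmul_eq_mul, Nat.cast_add, Nat.cast_mul, Nat.cast_ofNat,
      Polynomial.C_eq_natCast] at hd ⊢
    linear_combination (-(1 + X ^ 2) : Polynomial ℝ) * hd
  rw [Finset.mul_sum, Finset.sum_congr rfl main, ← Finset.mul_sum]
  congr 1
  rw [Finset.sum_add_distrib, ← Finset.mul_sum, ← Finset.mul_sum, ← derivative_sum]

theorem thmQ (n : ℕ) : polyQ 1 n = ∑ σ : Equiv.Perm (Fin n),
    (X : Polynomial ℝ) ^ dda n σ 0 (n + 1) * (1 + X ^ 2) ^ va n σ 0 (n + 1) := by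
  induction n with
  | zero =>
    have h1 : ∀ σ : Equiv.Perm (Fin 0),
        (X : Polynomial ℝ) ^ dda 0 σ 0 1 * (1 + X ^ 2) ^ va 0 σ 0 1 = 1 := by
      intro σ
      have : Finset.Icc 1 0 = (∅ : Finset ℕ) := by simp
      simp [dda, va, this]
    rw [Finset.sum_congr rfl (fun σ _ => h1 σ), Finset.sum_const]
    simp [polyQ, Fintype.card_perm]
  | succ n ih =>
    show (1 + X ^ 2) * derivative (polyQ 1 n) + C 1 * X * polyQ 1 n = _
    rw [ih, core n (n + 1) (n + 2) 1 (Or.inl ⟨rfl, rfl, rfl⟩)]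
    norm_num

theorem thmR (n : ℕ) : polyQ 2 n = ∑ σ : Equiv.Perm (Fin (n + 1)),
    (X : Polynomial ℝ) ^ dda (n + 1) σ 0 0 * (1 + X ^ 2) ^ va (n + 1) σ 0 0 := by
  induction n with
  | zero =>
    have h1 : ∀ σ : Equiv.Perm (Fin 1),
        (X : Polynomial ℝ) ^ dda 1 σ 0 0 * (1 + X ^ 2) ^ va 1 σ 0 0 = 1 := by
      intro σ
      have hσ : (σ ⟨0, by omega⟩ : Fin 1).val = 0 := by omega
      have e1 : extSeq 1 σ 0 0 1 = 1 := by
        rw [extSeq, dif_pos (by omega)]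
        omega
      have e0 : extSeq 1 σ 0 0 0 = 0 := extSeq_zero _ _ _ _
      have e2 : extSeq 1 σ 0 0 2 = 0 := extSeq_top _ _ _ _ 2 (by omega)
      have hdda : dda 1 σ 0 0 = 0 := by
        unfold dda
        convert Finset.card_empty
        rw [Finset.filter_eq_empty_iff]
        intro i hi
        simp only [Finset.mem_Icc] at hi
        have : i = 1 := by omega
        subst this
        norm_num [e0, e1, e2]
      have hva : va 1 σ 0 0 = 0 := by
        unfold va
        have hIcc : Finset.Icc 1 1 = {1} := by decide
        rw [hIcc, Finset.filter_singleton, if_neg (by norm_num [e0, e1, e2])]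
        simp
      rw [hdda, hva]
      simp
    rw [Finset.sum_congr rfl (fun σ _ => h1 σ), Finset.sum_const]
    simp [polyQ, Fintype.card_perm]
  | succ n ih =>
    show (1 + X ^ 2) * derivative (polyQ 2 n) + C 2 * X * polyQ 2 n = _
    rw [ih, core (n + 1) 0 0 2 (Or.inr ⟨rfl, rfl, by omega, rfl⟩)]
    norm_num

lemma polyP_succ (n : ℕ) : polyP (n + 1) = (1 + X ^ 2) * polyQ 2 n := by
  induction n with
  | zero =>
    show (1 + X ^ 2) * derivative (X : Polynomial ℝ) = (1 + X ^ 2) * 1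
    simp
  | succ n ih =>
    show (1 + X ^ 2) * derivative (polyP (n + 1)) = _
    rw [ih]
    show _ = (1 + X ^ 2) * ((1 + X ^ 2) * derivative (polyQ 2 n) + C 2 * X * polyQ 2 n)
    rw [derivative_mul]
    have : derivative (1 + X ^ 2 : Polynomial ℝ) = C 2 * X := by simp [derivative_X_pow]; rw [← C_1, ← C_add]; norm_num
    rw [this]
    ring

lemma pk_succ_va (m : ℕ) (σ : Equiv.Perm (Fin (m + 1))) :
    pk (m + 1) σ 0 0 = va (m + 1) σ 0 0 + 1 := by
  have hbS : (0 : ℕ) = (m + 1) + 1 ∨ ((0 : ℕ) = 0 ∧ 1 ≤ m + 1) := Or.inr ⟨rfl, by omega⟩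
  rw [pk_eq_cnt (m + 1) σ 0 hbS, va_eq_cnt (m + 1) σ 0 hbS]
  have h := telP (upw (m + 1) σ 0) (m + 1) (upw_zero (m + 1) σ 0 (Or.inr ⟨rfl, by omega⟩))
  rw [upw_top_R (m + 1) σ (by omega)] at h
  simp at h
  omega

lemma stmt2' (m : ℕ) : polyP (m + 1) = ∑ σ : Equiv.Perm (Fin (m + 1)),
    (X : Polynomial ℝ) ^ dda (m + 1) σ 0 0 * (1 + X ^ 2) ^ pk (m + 1) σ 0 0 := by
  rw [polyP_succ, thmR m, Finset.mul_sum]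
  apply Finset.sum_congr rfl
  intro σ _
  rw [pk_succ_va m σ, pow_succ]
  ring

lemma flipSeq (n : ℕ) (σ : Equiv.Perm (Fin n)) (i : ℕ) :
    extSeq n (Fin.revPerm * σ) 0 0 i + extSeq n σ (n + 1) (n + 1) i = n + 1 := by
  unfold extSeq
  by_cases h : 1 ≤ i ∧ i ≤ n
  · rw [dif_pos h, dif_pos h]
    have hlt := (σ ⟨i - 1, by omega⟩).isLt
    simp only [Equiv.Perm.mul_apply, Fin.revPerm_apply, Fin.val_rev]
    omega
  · rw [dif_neg h, dif_neg h]
    by_cases h0 : i = 0 <;> simp [h0]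

lemma flip_dda (n : ℕ) (σ : Equiv.Perm (Fin n)) :
    dda n σ (n + 1) (n + 1) = dda n (Fin.revPerm * σ) 0 0 := by
  unfold dda
  congr 1
  apply Finset.filter_congr
  intro i hi
  have f1 := flipSeq n σ (i - 1)
  have f2 := flipSeq n σ i
  have f3 := flipSeq n σ (i + 1)
  constructor <;> intro h <;> omega

lemma flip_va (n : ℕ) (σ : Equiv.Perm (Fin n)) :
    va n σ (n + 1) (n + 1) = pk n (Fin.revPerm * σ) 0 0 := by
  unfold va pk
  congr 1
  apply Finset.filter_congr
  intro i hi
  have f1 := flipSeq n σ (i - 1)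
  have f2 := flipSeq n σ i
  have f3 := flipSeq n σ (i + 1)
  constructor <;> intro h <;> omega

lemma stmt1' (m : ℕ) : polyP (m + 1) = ∑ σ : Equiv.Perm (Fin (m + 1)),
    (X : Polynomial ℝ) ^ dda (m + 1) σ (m + 1 + 1) (m + 1 + 1)
      * (1 + X ^ 2) ^ va (m + 1) σ (m + 1 + 1) (m + 1 + 1) := by
  rw [stmt2' m]
  symm
  apply Fintype.sum_equiv (Equiv.mulLeft (Fin.revPerm : Equiv.Perm (Fin (m + 1))))
  intro σ
  rw [flip_dda (m + 1) σ, flip_va (m + 1) σ]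
  rfl

theorem stmt11 (n : ℕ) :
    (1 ≤ n →
      (polyP n = ∑ σ : Equiv.Perm (Fin n),
        (X : Polynomial ℝ) ^ dda n σ (n + 1) (n + 1) * (1 + X ^ 2) ^ va n σ (n + 1) (n + 1)) ∧
      (polyP n = ∑ σ : Equiv.Perm (Fin n),
        (X : Polynomial ℝ) ^ dda n σ 0 0 * (1 + X ^ 2) ^ pk n σ 0 0)) ∧
    (polyQ 1 n = ∑ σ : Equiv.Perm (Fin n),
      (X : Polynomial ℝ) ^ dda n σ 0 (n + 1) * (1 + X ^ 2) ^ va n σ 0 (n + 1)) ∧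
    (polyQ 2 n = ∑ σ : Equiv.Perm (Fin (n + 1)),
      (X : Polynomial ℝ) ^ dda (n + 1) σ 0 0 * (1 + X ^ 2) ^ va (n + 1) σ 0 0) := by
  refine ⟨fun hn => ?_, thmQ n, thmR n⟩
  obtain ⟨m, rfl⟩ : ∃ m, n = m + 1 := ⟨n - 1, by omega⟩
  exact ⟨stmt1' m, stmt2' m⟩
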